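/- Let i ≠ j be indices in {1, …, n}. Suppose α, β : {p_1, …, p_n} → ℚ[G] are such that r(p_k,p_l) = α(p_k)(e − p_l) + β(p_l)(e − p_k) ∈ ℤ[G] for all k, l = 1, …, n (i.e. the element r = Σ_{k,l} r(p_k,p_l) ⊗ p_k ⊗ p_l of M_ℚ(A,B) lies in M(A,B)). Then there exists t ∈ ℚ such that (α(p_i) + β(p_i))(e − p_j) − tN ∈ ℤ[G], and every such t satisfies t·m_i ∈ ℤ and t·m_j ∈ ℤ (hence t·gcd(m_i,m_j) ∈ ℤ). -/

import Mathlib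

open MonoidAlgebra Finset

/-- The integral group ring ℤ[G]. -/
noncomputable abbrev ZG (G : Type) [CommGroup G] := MonoidAlgebra ℤ G

/-- The rational group ring ℚ[G]. -/
noncomputable abbrev QG (G : Type) [CommGroup G] := MonoidAlgebra ℚ G

/-- The canonical embedding ℤ[G] → ℚ[G]. -/
noncomputable def toQ (G : Type) [CommGroup G] : ZG G →ₐ[ℤ] QG G :=
  MonoidAlgebra.lift ℤ (QG G) G (MonoidAlgebra.of ℚ G)

/-- "x ∈ ℤ[G]" for an element x of ℚ[G]. -/
def MemZG (G : Type) [CommGroup G] (x : QG G) : Prop := ∃ z : ZG G, toQ G z = x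

/-- G = ℤ_{m₁} × ℤ_{m₂} × ⋯ × ℤ_{mₙ}, written multiplicatively. -/
abbrev Gr {n : ℕ} (m : Fin n → ℕ) : Type := (i : Fin n) → Multiplicative (ZMod (m i))

/-- pᵢ, the generator of the i-th factor of G. -/
def pgen {n : ℕ} (m : Fin n → ℕ) (i : Fin n) : Gr m :=
  Pi.mulSingle i (Multiplicative.ofAdd 1)

/-- Pᵢ = e + pᵢ + pᵢ² + ⋯ + pᵢ^{mᵢ−1} ∈ ℤ[G]. -/
noncomputable def Pel {n : ℕ} (m : Fin n → ℕ) (i : Fin n) : ZG (Gr m) :=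
  ∑ k ∈ Finset.range (m i), (MonoidAlgebra.of ℤ (Gr m) (pgen m i)) ^ k

/-- Qᵢ = ∏_{j ≠ i} Pⱼ ∈ ℤ[G]. -/
noncomputable def Qel {n : ℕ} (m : Fin n → ℕ) (i : Fin n) : ZG (Gr m) :=
  ∏ j ∈ Finset.univ.erase i, Pel m j

/-- N = Σ_{g ∈ G} g ∈ ℤ[G]. -/
noncomputable def Nel {n : ℕ} (m : Fin n → ℕ) [∀ i, NeZero (m i)] : ZG (Gr m) :=
  ∑ g : Gr m, MonoidAlgebra.of ℤ (Gr m) g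

instance instCoeFunMonoidAlgebraCoeff {R M : Type*} [Semiring R] :
    CoeFun (MonoidAlgebra R M) (fun _ => M → R) := ⟨fun x => x.coeff⟩

variable {G : Type} [CommGroup G]

lemma toQ_single (g : G) (a : ℤ) : toQ G (single g a) = single g (a : ℚ) := by
  rw [toQ, MonoidAlgebra.lift_single]
  rw [MonoidAlgebra.of_apply, MonoidAlgebra.smul_single, zsmul_eq_mul, mul_one]

open scoped Classical in
lemma toQ_apply (z : ZG G) (g : G) : toQ G z g = (z g : ℚ) := by
  induction z using MonoidAlgebra.induction_linear with
  | zero => simp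
  | add f g hf hg => rw [map_add]; rw [MonoidAlgebra.coeff_add, Finsupp.add_apply]; rw [hf, hg]; simp
  | single a b => rw [toQ_single]; erw [Finsupp.single_apply, Finsupp.single_apply]; split <;> simp

lemma memZG_iff (x : QG G) : MemZG G x ↔ ∀ g, ∃ a : ℤ, x g = a := by
  constructor
  · rintro ⟨z, rfl⟩ g; exact ⟨z g, toQ_apply z g⟩
  · intro h
    classical
    refine ⟨∑ g ∈ x.coeff.support, single g (h g).choose, ?_⟩
    ext g
    rw [map_sum, MonoidAlgebra.coeff_sum, Finsupp.finset_sum_apply]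
    have : ∀ g' ∈ x.coeff.support, toQ G (single g' (h g').choose) g
        = if g' = g then ((h g').choose : ℚ) else 0 := by
      intro g' _; rw [toQ_single]; simp [Finsupp.single_apply]
    rw [Finset.sum_congr rfl this, Finset.sum_ite_eq']
    split
    · next hg => exact ((h g).choose_spec).symm
    · next hg => exact (Finsupp.notMem_support_iff.mp hg).symm

lemma memZG_add {x y : QG G} (hx : MemZG G x) (hy : MemZG G y) : MemZG G (x + y) := by
  obtain ⟨z, rfl⟩ := hx; obtain ⟨w, rfl⟩ := hy; exact ⟨z + w, map_add _ _ _⟩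

lemma memZG_sub {x y : QG G} (hx : MemZG G x) (hy : MemZG G y) : MemZG G (x - y) := by
  obtain ⟨z, rfl⟩ := hx; obtain ⟨w, rfl⟩ := hy; exact ⟨z - w, map_sub _ _ _⟩

lemma memZG_mul {x y : QG G} (hx : MemZG G x) (hy : MemZG G y) : MemZG G (x * y) := by
  obtain ⟨z, rfl⟩ := hx; obtain ⟨w, rfl⟩ := hy; exact ⟨z * w, map_mul _ _ _⟩

lemma toQ_of (g : G) : toQ G (MonoidAlgebra.of ℤ G g) = MonoidAlgebra.of ℚ G g := by
  rw [MonoidAlgebra.of_apply, MonoidAlgebra.of_apply, toQ_single, Int.cast_one]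

lemma memZG_one_sub_of (g : G) : MemZG G (1 - MonoidAlgebra.of ℚ G g) :=
  ⟨1 - MonoidAlgebra.of ℤ G g, by rw [map_sub, map_one, toQ_of]⟩

section main
variable {n : ℕ} (m : Fin n → ℕ) [∀ i, NeZero (m i)]

lemma pgen_pow_val (i : Fin n) (a : Multiplicative (ZMod (m i))) :
    (pgen m i) ^ (Multiplicative.toAdd a).val = Pi.mulSingle i a := by
  rw [pgen, ← MonoidHom.mulSingle_apply, ← map_pow, MonoidHom.mulSingle_apply]
  have h1 : (Multiplicative.ofAdd (1 : ZMod (m i))) ^ (Multiplicative.toAdd a).val = a :=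
    Multiplicative.toAdd.injective
      (by rw [toAdd_pow, toAdd_ofAdd, nsmul_eq_mul, mul_one, ZMod.natCast_val, ZMod.cast_id])
  rw [h1]

lemma pgen_pow_m (i : Fin n) : (pgen m i) ^ (m i) = 1 := by
  rw [pgen, ← MonoidHom.mulSingle_apply, ← map_pow]
  have h1 : (Multiplicative.ofAdd (1 : ZMod (m i))) ^ (m i) = 1 :=
    Multiplicative.toAdd.injective
      (by rw [toAdd_pow, toAdd_ofAdd, nsmul_eq_mul, mul_one, ZMod.natCast_self, toAdd_one])
  rw [h1, map_one]

/-- A subgroup containing all pgen's is everything. -/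
lemma subgroup_eq_top (H : Subgroup (Gr m)) (hH : ∀ i, pgen m i ∈ H) (g : Gr m) : g ∈ H := by
  classical
  have : g = ∏ i, Pi.mulSingle i (g i) := (Finset.univ_prod_mulSingle g).symm
  rw [this]
  refine Subgroup.prod_mem H (fun i _ => ?_)
  rw [← pgen_pow_val]
  exact pow_mem (hH i) _



lemma toQ_Pel (i : Fin n) :
    toQ (Gr m) (Pel m i) = ∑ k ∈ Finset.range (m i), (MonoidAlgebra.of ℚ (Gr m) (pgen m i)) ^ k := by
  rw [Pel, map_sum]; exact Finset.sum_congr rfl fun k _ => by rw [map_pow, toQ_of]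

lemma Pel_mul_zero (i : Fin n) :
    toQ (Gr m) (Pel m i) * (1 - MonoidAlgebra.of ℚ (Gr m) (pgen m i)) = 0 := by
  have hg := geom_sum_mul (MonoidAlgebra.of ℚ (Gr m) (pgen m i)) (m i)
  have hpow : (MonoidAlgebra.of ℚ (Gr m) (pgen m i)) ^ (m i) = 1 := by
    rw [← map_pow, pgen_pow_m, map_one]
  rw [toQ_Pel]
  have h2 : (1 : QG (Gr m)) - MonoidAlgebra.of ℚ (Gr m) (pgen m i)
      = -(MonoidAlgebra.of ℚ (Gr m) (pgen m i) - 1) := by ring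
  rw [h2, mul_neg, hg, hpow, sub_self, neg_zero]

lemma coeff_Pel_mul (i : Fin n) (x : QG (Gr m)) (g : Gr m) :
    (toQ (Gr m) (Pel m i) * x) g = ∑ k ∈ Finset.range (m i), x ((pgen m i ^ k)⁻¹ * g) := by
  rw [toQ_Pel, Finset.sum_mul, MonoidAlgebra.coeff_sum, Finsupp.finset_sum_apply]
  refine Finset.sum_congr rfl fun k _ => ?_
  rw [← map_pow, MonoidAlgebra.of_apply, MonoidAlgebra.coeff_single_mul_apply, one_mul]

lemma Nel_coeff (g : Gr m) : toQ (Gr m) (Nel m) g = 1 := by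
  classical
  rw [Nel, map_sum, MonoidAlgebra.coeff_sum, Finsupp.finset_sum_apply]
  have h1 : ∀ g' ∈ (Finset.univ : Finset (Gr m)),
      toQ (Gr m) (MonoidAlgebra.of ℤ (Gr m) g') g = if g' = g then (1:ℚ) else 0 := fun g' _ => by
    rw [toQ_of, MonoidAlgebra.of_apply]; simp [Finsupp.single_apply]
  rw [Finset.sum_congr rfl h1, Finset.sum_ite_eq', if_pos (Finset.mem_univ g)]

lemma coeff_one_sub_mul (k : Fin n) (x : QG (Gr m)) (g : Gr m) :
    ((1 - MonoidAlgebra.of ℚ (Gr m) (pgen m k)) * x) g = x g - x ((pgen m k)⁻¹ * g) := by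
  rw [sub_mul, one_mul]
  rw [MonoidAlgebra.coeff_sub, Finsupp.sub_apply]
  rw [MonoidAlgebra.of_apply, MonoidAlgebra.coeff_single_mul_apply, one_mul]

end main
/-- Existence of t ∈ ℚ with κ_{i,j}(r) − tN ∈ ℤ[G], for i ≠ j and r ∈ ρ⁻¹(T(N(A,B))) given
by a representation r(pₖ,pₗ) = α(pₖ)(e − pₗ) + β(pₗ)(e − pₖ) ∈ ℤ[G]; moreover any such t
satisfies t·mᵢ ∈ ℤ and t·mⱼ ∈ ℤ (hence t·gcd(mᵢ,mⱼ) ∈ ℤ). -/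
theorem statement10
    (n : ℕ) (hn : 1 ≤ n) (m : Fin n → ℕ) [∀ i, NeZero (m i)]
    (i j : Fin n) (hij : i ≠ j)
    (α β : Fin n → QG (Gr m))
    (h : ∀ k l, MemZG (Gr m)
      (α k * (1 - MonoidAlgebra.of ℚ (Gr m) (pgen m l))
        + β l * (1 - MonoidAlgebra.of ℚ (Gr m) (pgen m k)))) :
    (∃ t : ℚ, MemZG (Gr m)
      ((α i + β i) * (1 - MonoidAlgebra.of ℚ (Gr m) (pgen m j))
        - t • toQ (Gr m) (Nel m)))
    ∧
    ∀ t : ℚ, MemZG (Gr m)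
      ((α i + β i) * (1 - MonoidAlgebra.of ℚ (Gr m) (pgen m j))
        - t • toQ (Gr m) (Nel m)) →
      (∃ a : ℤ, t * (m i : ℚ) = (a : ℚ)) ∧ (∃ a : ℤ, t * (m j : ℚ) = (a : ℚ))
        ∧ (∃ a : ℤ, t * (Nat.gcd (m i) (m j) : ℚ) = (a : ℚ)) := by
  classical
  set oq : Fin n → QG (Gr m) := fun k => MonoidAlgebra.of ℚ (Gr m) (pgen m k) with hoq
  set c : QG (Gr m) := (α i + β i) * (1 - oq j) with hc
  -- c is "constant modulo ℤ[G]" in every generator direction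
  have hinv : ∀ k, MemZG (Gr m) ((1 - oq k) * c) := by
    intro k
    have key : (1 - oq k) * c
        = (1 - oq j) * (α i * (1 - oq k) + β k * (1 - oq i))
          - (1 - oq i) * (α j * (1 - oq k) + β k * (1 - oq j))
          + (1 - oq k) * (α j * (1 - oq i) + β i * (1 - oq j)) := by rw [hc]; ring
    rw [key]
    exact memZG_add (memZG_sub (memZG_mul (memZG_one_sub_of _) (h i k))
      (memZG_mul (memZG_one_sub_of _) (h j k))) (memZG_mul (memZG_one_sub_of _) (h j i))
  have hdiff : ∀ g x : Gr m, ∃ a : ℤ, c (g * x) - c x = a := by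
    intro g x
    let H : Subgroup (Gr m) :=
      { carrier := {g | ∀ x, ∃ a : ℤ, c (g * x) - c x = (a : ℚ)}
        one_mem' := fun y => ⟨0, by simp⟩
        mul_mem' := by
          rintro a b ha hb y
          obtain ⟨u, hu⟩ := ha (b * y); obtain ⟨v, hv⟩ := hb y
          exact ⟨u + v, by push_cast; rw [← hu, ← hv, mul_assoc]; ring⟩
        inv_mem' := by
          rintro a ha y
          obtain ⟨u, hu⟩ := ha (a⁻¹ * y)
          exact ⟨-u, by push_cast; rw [← hu, mul_inv_cancel_left]; ring⟩ }
    have hk : ∀ k, pgen m k ∈ H := by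
      intro k y
      obtain ⟨a, ha⟩ := (memZG_iff _).mp (hinv k) (pgen m k * y)
      rw [coeff_one_sub_mul m k c (pgen m k * y), inv_mul_cancel_left] at ha
      exact ⟨a, ha⟩
    exact subgroup_eq_top m H hk g x
  constructor
  · refine ⟨c 1, ?_⟩
    rw [memZG_iff]
    intro g
    obtain ⟨a, ha⟩ := hdiff g 1
    rw [mul_one] at ha
    refine ⟨a, ?_⟩
    rw [MonoidAlgebra.coeff_sub, Finsupp.sub_apply, MonoidAlgebra.coeff_smul, Finsupp.smul_apply]
    rw [Nel_coeff, smul_eq_mul, mul_one]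
    exact ha
  · intro t ht
    rw [memZG_iff] at ht
    have hcoef : ∀ g, ∃ a : ℤ, c g = t + a := by
      intro g
      obtain ⟨a, ha⟩ := ht g
      refine ⟨a, ?_⟩
      have h2 : (c - t • toQ (Gr m) (Nel m)) g = c g - t := by
        rw [MonoidAlgebra.coeff_sub, Finsupp.sub_apply, MonoidAlgebra.coeff_smul, Finsupp.smul_apply]
        rw [Nel_coeff, smul_eq_mul, mul_one]
      rw [h2] at ha
      linarith
    -- the i part
    have hmi : ∃ a : ℤ, t * (m i : ℚ) = (a : ℚ) := by
      have hS : MemZG (Gr m) (toQ (Gr m) (Pel m i) * c) := by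
        have key2 : toQ (Gr m) (Pel m i) * c
            = toQ (Gr m) (Pel m i)
              * ((α i * (1 - oq j) + β j * (1 - oq i)) + (α j * (1 - oq i) + β i * (1 - oq j)))
              - (toQ (Gr m) (Pel m i) * (1 - oq i)) * (α j + β j) := by rw [hc]; ring
        rw [key2, Pel_mul_zero, zero_mul, sub_zero]
        exact memZG_mul ⟨Pel m i, rfl⟩ (memZG_add (h i j) (h j i))
      obtain ⟨b, hb⟩ := (memZG_iff _).mp hS 1
      rw [coeff_Pel_mul] at hb
      set f : ℕ → ℤ := fun k => (hcoef ((pgen m i ^ k)⁻¹ * 1)).choose with hf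
      have hsum : ∑ k ∈ Finset.range (m i), c ((pgen m i ^ k)⁻¹ * 1)
          = (m i : ℚ) * t + ∑ k ∈ Finset.range (m i), (f k : ℚ) := by
        have : ∀ k ∈ Finset.range (m i), c ((pgen m i ^ k)⁻¹ * 1) = t + (f k : ℚ) :=
          fun k _ => (hcoef ((pgen m i ^ k)⁻¹ * 1)).choose_spec
        rw [Finset.sum_congr rfl this, Finset.sum_add_distrib, Finset.sum_const,
          Finset.card_range, nsmul_eq_mul]
      refine ⟨b - ∑ k ∈ Finset.range (m i), f k, ?_⟩
      rw [hsum] at hb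
      push_cast
      linarith
    -- the j part
    have hmj : ∃ a : ℤ, t * (m j : ℚ) = (a : ℚ) := by
      have hPj : toQ (Gr m) (Pel m j) * c = 0 := by
        have key3 : toQ (Gr m) (Pel m j) * c
            = (α i + β i) * (toQ (Gr m) (Pel m j) * (1 - oq j)) := by rw [hc]; ring
        rw [key3, Pel_mul_zero, mul_zero]
      have hb : (toQ (Gr m) (Pel m j) * c) 1 = 0 := by rw [hPj]; rfl
      rw [coeff_Pel_mul] at hb
      set f : ℕ → ℤ := fun k => (hcoef ((pgen m j ^ k)⁻¹ * 1)).choose with hf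
      have hsum : ∑ k ∈ Finset.range (m j), c ((pgen m j ^ k)⁻¹ * 1)
          = (m j : ℚ) * t + ∑ k ∈ Finset.range (m j), (f k : ℚ) := by
        have : ∀ k ∈ Finset.range (m j), c ((pgen m j ^ k)⁻¹ * 1) = t + (f k : ℚ) :=
          fun k _ => (hcoef ((pgen m j ^ k)⁻¹ * 1)).choose_spec
        rw [Finset.sum_congr rfl this, Finset.sum_add_distrib, Finset.sum_const,
          Finset.card_range, nsmul_eq_mul]
      refine ⟨-∑ k ∈ Finset.range (m j), f k, ?_⟩
      rw [hsum] at hb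
      push_cast
      linarith
    refine ⟨hmi, hmj, ?_⟩
    obtain ⟨A, hA⟩ := hmi
    obtain ⟨B, hB⟩ := hmj
    refine ⟨A * Nat.gcdA (m i) (m j) + B * Nat.gcdB (m i) (m j), ?_⟩
    have hbez := Nat.gcd_eq_gcd_ab (m i) (m j)
    have hbezq : ((Nat.gcd (m i) (m j) : ℤ) : ℚ)
        = ((m i : ℤ) * Nat.gcdA (m i) (m j) + (m j : ℤ) * Nat.gcdB (m i) (m j) : ℤ) := by
      exact_mod_cast congrArg (fun z : ℤ => (z : ℚ)) hbez
    push_cast at hbezq ⊢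
    rw [hbezq]
    linear_combination ((Nat.gcdA (m i) (m j) : ℚ)) * hA + ((Nat.gcdB (m i) (m j) : ℚ)) * hB
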